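/- (Theorem 1(ii), value-function form.) In the binary monopoly model, for every α ∈ (0,1]: the value function W^α is concave on [0,1] if and only if E_α is nonincreasing on (p_L*, p_H*); and W^α is convex on [0,1] if and only if E_α is nondecreasing on (p_L*, p_H*). -/

import Mathlib

open Set

lemma aux_invcont {g : ℝ → ℝ} {a b : ℝ} (hab : a < b)
    (hmono : StrictMonoOn g (Set.Icc a b))
    (hsurj : ∀ y ∈ Set.Icc (g a) (g b), ∃ x ∈ Set.Icc a b, g x = y) :
    ContinuousOn g (Set.Icc a b) := by
  have haI : a ∈ Icc a b := left_mem_Icc.2 hab.le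
  have hbI : b ∈ Icc a b := right_mem_Icc.2 hab.le
  intro x hx
  have hright : x < b → ContinuousWithinAt g (Set.Ici x) x := by
    intro hxb'
    refine hmono.continuousWithinAt_right_of_exists_between
      (Icc_mem_nhdsGE_of_mem ⟨hx.1, hxb'⟩) ?_
    intro y hy
    have hgxb : g x < g b := hmono hx hbI hxb'
    have hgax : g a ≤ g x := hmono.monotoneOn haI hx hx.1
    obtain ⟨c, hc, hgc⟩ := hsurj (min y (g b))
      ⟨le_min (hgax.trans_lt hy).le (hmono.monotoneOn haI hbI hab.le), min_le_right _ _⟩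
    exact ⟨c, hc, by rw [hgc]; exact ⟨lt_min hy hgxb, min_le_left _ _⟩⟩
  have hleft : a < x → ContinuousWithinAt g (Set.Iic x) x := by
    intro hax'
    refine hmono.continuousWithinAt_left_of_exists_between
      (Icc_mem_nhdsLE_of_mem ⟨hax', hx.2⟩) ?_
    intro y hy
    have hgax : g a < g x := hmono haI hx hax'
    have hgxb : g x ≤ g b := hmono.monotoneOn hx hbI hx.2
    obtain ⟨c, hc, hgc⟩ := hsurj (max y (g a))
      ⟨le_max_right _ _, max_le (hy.le.trans hgxb) (hmono.monotoneOn haI hbI hab.le)⟩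
    exact ⟨c, hc, by rw [hgc]; exact ⟨le_max_left _ _, max_lt hy hgax⟩⟩
  rcases eq_or_lt_of_le hx.1 with h | hax
  · subst h
    exact (hright hab).mono fun z hz => hz.1
  rcases eq_or_lt_of_le hx.2 with h | hxb
  · subst h
    exact (hleft hab).mono fun z hz => hz.2
  exact ((hleft hax).union (hright hxb)).mono fun z _ => le_total z x

/-- (Theorem 1(ii), value-function form.) In the binary monopoly model,
for every `α ∈ (0,1]`: the value function `W^α` is concave on `[0,1]` iff the marginal
expression `E_α` is nonincreasing on `(p_L*, p_H*)`, and convex iff `E_α` is nondecreasing. -/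
theorem stmt_2
    (I : Set ℝ) (DL DH RL RH : ℝ → ℝ) (pLs pHs : ℝ)
    (hIopen : IsOpen I) (hIconv : Convex ℝ I) (hIpos : I ⊆ Set.Ioi (0:ℝ))
    (hRL : RL = fun q => q * DL q) (hRH : RH = fun q => q * DH q)
    (hDL : ContDiffOn ℝ 2 DL I) (hDH : ContDiffOn ℝ 2 DH I)
    (hDLpos : ∀ q ∈ I, 0 < DL q) (hDHpos : ∀ q ∈ I, 0 < DH q)
    (hDL' : ∀ q ∈ I, deriv DL q < 0) (hDH' : ∀ q ∈ I, deriv DH q < 0)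
    (hRL'' : ∀ q ∈ I, deriv (deriv RL) q < 0) (hRH'' : ∀ q ∈ I, deriv (deriv RH) q < 0)
    (hpLs : pLs ∈ I) (hpHs : pHs ∈ I) (hlt : pLs < pHs)
    (hRL' : deriv RL pLs = 0) (hRH' : deriv RH pHs = 0)
    (p : ℝ → ℝ)
    (hp : ∀ μ ∈ Set.Icc (0:ℝ) 1, p μ ∈ Set.Icc pLs pHs ∧
      (1 - μ) * deriv RL (p μ) + μ * deriv RH (p μ) = 0)
    (α : ℝ) (hα : α ∈ Set.Ioc (0:ℝ) 1)
    (CSL CSH VL VH : ℝ → ℝ)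
    (hCSL : ∀ q ∈ I, HasDerivAt CSL (-(DL q)) q)
    (hCSH : ∀ q ∈ I, HasDerivAt CSH (-(DH q)) q)
    (hVL : VL = fun q => α * CSL q + (1 - α) * RL q)
    (hVH : VH = fun q => α * CSH q + (1 - α) * RH q)
    (W : ℝ → ℝ)
    (hW : W = fun μ => (1 - μ) * VL (p μ) + μ * VH (p μ))
    (E : ℝ → ℝ)
    (hE : ∀ q ∈ Set.Ioo pLs pHs, E q =
      VH q - VL q +
        (deriv VL q - (deriv RL q / deriv RH q) * deriv VH q) /
          (deriv (deriv RL) q - (deriv RL q / deriv RH q) * deriv (deriv RH) q) *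
          (deriv RL q - deriv RH q)) :
    (ConcaveOn ℝ (Set.Icc (0:ℝ) 1) W ↔ AntitoneOn E (Set.Ioo pLs pHs)) ∧
    (ConvexOn ℝ (Set.Icc (0:ℝ) 1) W ↔ MonotoneOn E (Set.Ioo pLs pHs)) := by
  have hIcc : Icc pLs pHs ⊆ I := hIconv.ordConnected.out hpLs hpHs
  -- smoothness of RL, RH
  have hRL2 : ContDiffOn ℝ 2 RL I := by
    rw [hRL]; exact ContDiffOn.mul contDiffOn_id hDL
  have hRH2 : ContDiffOn ℝ 2 RH I := by
    rw [hRH]; exact ContDiffOn.mul contDiffOn_id hDH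
  have hRL1 : ContDiffOn ℝ 1 (deriv RL) I := hRL2.deriv_of_isOpen hIopen (by norm_num)
  have hRH1 : ContDiffOn ℝ 1 (deriv RH) I := hRH2.deriv_of_isOpen hIopen (by norm_num)
  have hRLd : ∀ q ∈ I, HasDerivAt RL (deriv RL q) q := fun q hq =>
    ((hRL2.differentiableOn two_ne_zero q hq).differentiableAt
      (hIopen.mem_nhds hq)).hasDerivAt
  have hRHd : ∀ q ∈ I, HasDerivAt RH (deriv RH q) q := fun q hq =>
    ((hRH2.differentiableOn two_ne_zero q hq).differentiableAt
      (hIopen.mem_nhds hq)).hasDerivAt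
  have hLd : ∀ q ∈ I, HasDerivAt (deriv RL) (deriv (deriv RL) q) q := fun q hq =>
    ((hRL1.differentiableOn one_ne_zero q hq).differentiableAt (hIopen.mem_nhds hq)).hasDerivAt
  have hHd : ∀ q ∈ I, HasDerivAt (deriv RH) (deriv (deriv RH) q) q := fun q hq =>
    ((hRH1.differentiableOn one_ne_zero q hq).differentiableAt (hIopen.mem_nhds hq)).hasDerivAt
  -- strict monotonicity of the derivatives
  have hLanti : StrictAntiOn (deriv RL) I :=
    strictAntiOn_of_deriv_neg hIconv (hRL1.continuousOn) (fun q hq => by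
      rw [hIopen.interior_eq] at hq; exact hRL'' q hq)
  have hHanti : StrictAntiOn (deriv RH) I :=
    strictAntiOn_of_deriv_neg hIconv (hRH1.continuousOn) (fun q hq => by
      rw [hIopen.interior_eq] at hq; exact hRH'' q hq)
  -- sign facts
  have hLneg : ∀ q ∈ I, pLs < q → deriv RL q < 0 := fun q hq h => by
    have := hLanti hpLs hq h; rwa [hRL'] at this
  have hHpos : ∀ q ∈ I, q < pHs → 0 < deriv RH q := fun q hq h => by
    have := hHanti hq hpHs h; rwa [hRH'] at this
  have hLle : ∀ q ∈ Icc pLs pHs, deriv RL q ≤ 0 := by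
    intro q hq
    rcases eq_or_lt_of_le hq.1 with h | h
    · rw [← h, hRL']
    · exact (hLneg q (hIcc hq) h).le
  have hHle : ∀ q ∈ Icc pLs pHs, 0 ≤ deriv RH q := by
    intro q hq
    rcases eq_or_lt_of_le hq.2 with h | h
    · rw [h, hRH']
    · exact (hHpos q (hIcc hq) h).le
  have hdneg : ∀ q ∈ Icc pLs pHs, deriv RL q - deriv RH q < 0 := by
    intro q hq
    rcases eq_or_lt_of_le hq.1 with h | h
    · have := hHpos q (hIcc hq) (h ▸ hlt)
      have h0 : deriv RL q = 0 := by rw [← h, hRL']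
      linarith
    · linarith [hLneg q (hIcc hq) h, hHle q hq]
  set μf : ℝ → ℝ := fun q => deriv RL q / (deriv RL q - deriv RH q) with hμf_def
  set m' : ℝ → ℝ := fun q =>
    (deriv RL q * deriv (deriv RH) q - deriv (deriv RL) q * deriv RH q) /
      (deriv RL q - deriv RH q) ^ 2 with hm'_def
  have hμfd : ∀ q ∈ Icc pLs pHs, HasDerivAt μf (m' q) q := by
    intro q hq
    have h := HasDerivAt.div (hLd q (hIcc hq)) ((hLd q (hIcc hq)).sub (hHd q (hIcc hq)))
      (hdneg q hq).ne
    refine h.congr_deriv ?_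
    symm
    rw [hm'_def]
    simp only [Pi.sub_apply]
    congr 1
    ring
  have hm'pos : ∀ q ∈ Icc pLs pHs, 0 < m' q := by
    intro q hq
    have hd2 : 0 < (deriv RL q - deriv RH q) ^ 2 := by nlinarith [hdneg q hq]
    refine div_pos ?_ hd2
    rcases eq_or_lt_of_le hq.1 with h | h
    · have h0 : deriv RL q = 0 := by rw [← h, hRL']
      nlinarith [mul_pos (neg_pos.2 (hRL'' q (hIcc hq))) (hHpos q (hIcc hq) (h ▸ hlt)),
        mul_eq_zero_of_left h0 (deriv (deriv RH) q)]
    · nlinarith [mul_pos_of_neg_of_neg (hLneg q (hIcc hq) h) (hRH'' q (hIcc hq)),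
        mul_nonneg (neg_nonneg.2 (hRL'' q (hIcc hq)).le) (hHle q hq)]
  have hμfmono : StrictMonoOn μf (Icc pLs pHs) := by
    refine strictMonoOn_of_deriv_pos (convex_Icc _ _)
      (fun q hq => (hμfd q hq).continuousAt.continuousWithinAt) ?_
    intro q hq
    rw [interior_Icc] at hq
    rw [(hμfd q (Ioo_subset_Icc_self hq)).deriv]
    exact hm'pos q (Ioo_subset_Icc_self hq)
  have hμf0 : μf pLs = 0 := by rw [hμf_def]; simp [hRL']
  have hμf1 : μf pHs = 1 := by
    rw [hμf_def]
    simp only [hRH', sub_zero]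
    exact div_self (hLneg pHs hpHs hlt).ne
  have hpinv : ∀ μ ∈ Icc (0:ℝ) 1, μf (p μ) = μ := by
    intro μ hμ
    have h2 := (hp μ hμ).2
    have hne := (hdneg _ (hp μ hμ).1).ne
    have hL : deriv RL (p μ) = μ * (deriv RL (p μ) - deriv RH (p μ)) := by ring_nf; linarith
    show deriv RL (p μ) / (deriv RL (p μ) - deriv RH (p μ)) = μ
    exact (div_eq_iff hne).mpr hL
  have hpmono : StrictMonoOn p (Icc (0:ℝ) 1) := by
    intro μ1 h1 μ2 h2 h12
    have h := hμfmono.lt_iff_lt (hp μ1 h1).1 (hp μ2 h2).1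
    rw [hpinv μ1 h1, hpinv μ2 h2] at h
    exact h.mp h12
  have hμfmem : ∀ q ∈ Icc pLs pHs, μf q ∈ Icc (0:ℝ) 1 := by
    intro q hq
    constructor
    · rw [← hμf0]
      exact hμfmono.monotoneOn (left_mem_Icc.2 hlt.le) hq hq.1
    · rw [← hμf1]
      exact hμfmono.monotoneOn hq (right_mem_Icc.2 hlt.le) hq.2
  have hpμf : ∀ q ∈ Icc pLs pHs, p (μf q) = q := by
    intro q hq
    have h1 : μf (p (μf q)) = μf q := hpinv _ (hμfmem q hq)
    exact hμfmono.injOn (hp _ (hμfmem q hq)).1 hq h1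
  have hp0 : p 0 = pLs := by
    have h1 : μf (p 0) = μf pLs := by
      rw [hpinv 0 (left_mem_Icc.2 zero_le_one), hμf0]
    exact hμfmono.injOn (hp 0 (left_mem_Icc.2 zero_le_one)).1 (left_mem_Icc.2 hlt.le) h1
  have hp1 : p 1 = pHs := by
    have h1 : μf (p 1) = μf pHs := by
      rw [hpinv 1 (right_mem_Icc.2 zero_le_one), hμf1]
    exact hμfmono.injOn (hp 1 (right_mem_Icc.2 zero_le_one)).1 (right_mem_Icc.2 hlt.le) h1
  have hpIoo : ∀ μ ∈ Ioo (0:ℝ) 1, p μ ∈ Ioo pLs pHs := by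
    intro μ hμ
    have hμ' : μ ∈ Icc (0:ℝ) 1 := Ioo_subset_Icc_self hμ
    constructor
    · rw [← hp0]
      exact hpmono (left_mem_Icc.2 zero_le_one) hμ' hμ.1
    · rw [← hp1]
      exact hpmono hμ' (right_mem_Icc.2 zero_le_one) hμ.2
  have hpcont : ContinuousOn p (Icc (0:ℝ) 1) := by
    refine aux_invcont zero_lt_one hpmono ?_
    intro y hy
    rw [hp0, hp1] at hy
    exact ⟨μf y, hμfmem y hy, hpμf y hy⟩
  have hpd : ∀ μ ∈ Ioo (0:ℝ) 1, HasDerivAt p (m' (p μ))⁻¹ μ := by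
    intro μ hμ
    have hq : p μ ∈ Icc pLs pHs := (hp μ (Ioo_subset_Icc_self hμ)).1
    refine HasDerivAt.of_local_left_inverse
      (hpcont.continuousAt (Icc_mem_nhds hμ.1 hμ.2)) (hμfd (p μ) hq)
      (hm'pos (p μ) hq).ne' ?_
    filter_upwards [isOpen_Ioo.mem_nhds hμ] with y hy
    exact hpinv y (Ioo_subset_Icc_self hy)
  -- derivatives of VL, VH
  have hVLd : ∀ q ∈ I, HasDerivAt VL (α * (-(DL q)) + (1 - α) * deriv RL q) q := by
    intro q hq
    rw [hVL]
    exact ((hCSL q hq).const_mul α).add ((hRLd q hq).const_mul (1 - α))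
  have hVHd : ∀ q ∈ I, HasDerivAt VH (α * (-(DH q)) + (1 - α) * deriv RH q) q := by
    intro q hq
    rw [hVH]
    exact ((hCSH q hq).const_mul α).add ((hRHd q hq).const_mul (1 - α))
  have hVLderiv : ∀ q ∈ I, deriv VL q = α * (-(DL q)) + (1 - α) * deriv RL q :=
    fun q hq => (hVLd q hq).deriv
  have hVHderiv : ∀ q ∈ I, deriv VH q = α * (-(DH q)) + (1 - α) * deriv RH q :=
    fun q hq => (hVHd q hq).deriv
  -- derivative of W
  have hWd : ∀ μ ∈ Ioo (0:ℝ) 1, HasDerivAt W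
      ((-1) * VL (p μ) + (1 - μ) * (deriv VL (p μ) * (m' (p μ))⁻¹) +
        (1 * VH (p μ) + μ * (deriv VH (p μ) * (m' (p μ))⁻¹))) μ := by
    intro μ hμ
    have hqI : p μ ∈ I := hIcc (hp μ (Ioo_subset_Icc_self hμ)).1
    have hcompL : HasDerivAt (fun x => VL (p x)) (deriv VL (p μ) * (m' (p μ))⁻¹) μ := by
      have h := HasDerivAt.comp μ (hVLd (p μ) hqI) (hpd μ hμ)
      rw [hVLderiv (p μ) hqI]
      exact h
    have hcompH : HasDerivAt (fun x => VH (p x)) (deriv VH (p μ) * (m' (p μ))⁻¹) μ := by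
      have h := HasDerivAt.comp μ (hVHd (p μ) hqI) (hpd μ hμ)
      rw [hVHderiv (p μ) hqI]
      exact h
    have h1 : HasDerivAt (fun x => (1 - x) * VL (p x))
        ((-1) * VL (p μ) + (1 - μ) * (deriv VL (p μ) * (m' (p μ))⁻¹)) μ := by
      have hc : HasDerivAt (fun x : ℝ => 1 - x) (-1) μ := by
        simpa using (hasDerivAt_id μ).const_sub 1
      exact hc.mul hcompL
    have h2 : HasDerivAt (fun x => x * VH (p x))
        (1 * VH (p μ) + μ * (deriv VH (p μ) * (m' (p μ))⁻¹)) μ :=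
      (hasDerivAt_id μ).mul hcompH
    rw [hW]
    exact h1.add h2
  -- the derivative of W equals E ∘ p
  have hWE : ∀ μ ∈ Ioo (0:ℝ) 1, HasDerivAt W (E (p μ)) μ := by
    intro μ hμ
    have hq : p μ ∈ Ioo pLs pHs := hpIoo μ hμ
    have hq' : p μ ∈ Icc pLs pHs := Ioo_subset_Icc_self hq
    have hqI : p μ ∈ I := hIcc hq'
    convert hWd μ hμ using 1
    rw [hE (p μ) hq]
    -- notation
    set q := p μ with hqdef
    set a := deriv RL q with ha
    set b := deriv RH q with hb
    set A := deriv (deriv RL) q with hA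
    set B := deriv (deriv RH) q with hB
    set vl := deriv VL q
    set vh := deriv VH q
    have hμeq : μ = a / (a - b) := (hpinv μ (Ioo_subset_Icc_self hμ)).symm
    have habne : a - b ≠ 0 := (hdneg _ hq').ne
    have hbne : b ≠ 0 := (hHpos _ hqI hq.2).ne'
    have hnum : 0 < a * B - A * b := by
      have h := hm'pos _ hq'
      rw [hm'_def] at h
      simp only at h
      have h2 : 0 < (a - b)^2 := by nlinarith [hdneg _ hq']
      calc (0:ℝ) = 0 * (a-b)^2 := by ring
        _ < (a * B - A * b) / (a - b) ^ 2 * (a-b)^2 := by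
            exact mul_lt_mul_of_pos_right h h2
        _ = a * B - A * b := by field_simp
    have hm'val : m' q = (a * B - A * b) / (a - b)^2 := by rw [hm'_def]
    have hdenne : A - a / b * B ≠ 0 := by
      rw [div_mul_eq_mul_div, sub_div' hbne]
      exact div_ne_zero (by intro h; rw [sub_eq_zero] at h; nlinarith) hbne
    have h3 : a * B - A * b ≠ 0 := hnum.ne'
    have h4 : b * A - a * B ≠ 0 := fun h => h3 (by linarith [sub_eq_zero.mp h])
    have hinv : (m' q)⁻¹ = (a - b)^2 / (a * B - A * b) := by rw [hm'val, inv_div]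
    have e1 : (vl - a/b*vh)/(A - a/b*B) = (b*vl - a*vh)/(b*A - a*B) := by
      rw [div_eq_div_iff hdenne h4]
      field_simp
    have h5 : b * A - a * B = -(a * B - A * b) := by ring
    rw [hinv, e1, hμeq, h5]
    field_simp
    ring
  -- continuity and differentiability of W
  have hWderiv : ∀ μ ∈ Ioo (0:ℝ) 1, deriv W μ = E (p μ) := fun μ hμ => (hWE μ hμ).deriv
  have hWdiff : ∀ μ ∈ Ioo (0:ℝ) 1, DifferentiableAt ℝ W μ :=
    fun μ hμ => (hWE μ hμ).differentiableAt
  have hpmaps : ∀ μ ∈ Icc (0:ℝ) 1, p μ ∈ I := fun μ hμ => hIcc (hp μ hμ).1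
  have hVLc : ContinuousOn VL I := fun q hq => (hVLd q hq).continuousAt.continuousWithinAt
  have hVHc : ContinuousOn VH I := fun q hq => (hVHd q hq).continuousAt.continuousWithinAt
  have hWcont : ContinuousOn W (Icc (0:ℝ) 1) := by
    rw [hW]
    exact ((continuousOn_const.sub continuousOn_id).mul (hVLc.comp hpcont hpmaps)).add
      (continuousOn_id.mul (hVHc.comp hpcont hpmaps))
  -- transfer between monotonicity of E and of deriv W
  have htransA : AntitoneOn E (Ioo pLs pHs) ↔ AntitoneOn (deriv W) (Ioo (0:ℝ) 1) := by
    constructor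
    · intro hA μ1 h1 μ2 h2 h12
      rw [hWderiv μ1 h1, hWderiv μ2 h2]
      exact hA (hpIoo μ1 h1) (hpIoo μ2 h2)
        (hpmono.monotoneOn (Ioo_subset_Icc_self h1) (Ioo_subset_Icc_self h2) h12)
    · intro hA q1 h1 q2 h2 h12
      have hq1 : q1 ∈ Icc pLs pHs := Ioo_subset_Icc_self h1
      have hq2 : q2 ∈ Icc pLs pHs := Ioo_subset_Icc_self h2
      have hm1 : μf q1 ∈ Ioo (0:ℝ) 1 := by
        constructor
        · rw [← hμf0]; exact hμfmono (left_mem_Icc.2 hlt.le) hq1 h1.1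
        · rw [← hμf1]; exact hμfmono hq1 (right_mem_Icc.2 hlt.le) h1.2
      have hm2 : μf q2 ∈ Ioo (0:ℝ) 1 := by
        constructor
        · rw [← hμf0]; exact hμfmono (left_mem_Icc.2 hlt.le) hq2 h2.1
        · rw [← hμf1]; exact hμfmono hq2 (right_mem_Icc.2 hlt.le) h2.2
      have h12' : μf q1 ≤ μf q2 := hμfmono.monotoneOn hq1 hq2 h12
      have e1 : E q1 = deriv W (μf q1) := by rw [hWderiv _ hm1, hpμf q1 hq1]
      have e2 : E q2 = deriv W (μf q2) := by rw [hWderiv _ hm2, hpμf q2 hq2]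
      rw [e1, e2]
      exact hA hm1 hm2 h12'
  have htransM : MonotoneOn E (Ioo pLs pHs) ↔ MonotoneOn (deriv W) (Ioo (0:ℝ) 1) := by
    constructor
    · intro hA μ1 h1 μ2 h2 h12
      rw [hWderiv μ1 h1, hWderiv μ2 h2]
      exact hA (hpIoo μ1 h1) (hpIoo μ2 h2)
        (hpmono.monotoneOn (Ioo_subset_Icc_self h1) (Ioo_subset_Icc_self h2) h12)
    · intro hA q1 h1 q2 h2 h12
      have hq1 : q1 ∈ Icc pLs pHs := Ioo_subset_Icc_self h1
      have hq2 : q2 ∈ Icc pLs pHs := Ioo_subset_Icc_self h2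
      have hm1 : μf q1 ∈ Ioo (0:ℝ) 1 := by
        constructor
        · rw [← hμf0]; exact hμfmono (left_mem_Icc.2 hlt.le) hq1 h1.1
        · rw [← hμf1]; exact hμfmono hq1 (right_mem_Icc.2 hlt.le) h1.2
      have hm2 : μf q2 ∈ Ioo (0:ℝ) 1 := by
        constructor
        · rw [← hμf0]; exact hμfmono (left_mem_Icc.2 hlt.le) hq2 h2.1
        · rw [← hμf1]; exact hμfmono hq2 (right_mem_Icc.2 hlt.le) h2.2
      have h12' : μf q1 ≤ μf q2 := hμfmono.monotoneOn hq1 hq2 h12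
      have e1 : E q1 = deriv W (μf q1) := by rw [hWderiv _ hm1, hpμf q1 hq1]
      have e2 : E q2 = deriv W (μf q2) := by rw [hWderiv _ hm2, hpμf q2 hq2]
      rw [e1, e2]
      exact hA hm1 hm2 h12'
  constructor
  · constructor
    · intro hc
      rw [htransA]
      exact (hc.subset Ioo_subset_Icc_self (convex_Ioo 0 1)).antitoneOn_deriv hWdiff
    · intro hA
      refine AntitoneOn.concaveOn_of_deriv (convex_Icc 0 1) hWcont ?_ ?_
      · rw [interior_Icc]
        exact fun μ hμ => (hWdiff μ hμ).differentiableWithinAt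
      · rw [interior_Icc]
        exact htransA.mp hA
  · constructor
    · intro hc
      rw [htransM]
      exact (hc.subset Ioo_subset_Icc_self (convex_Ioo 0 1)).monotoneOn_deriv hWdiff
    · intro hA
      refine MonotoneOn.convexOn_of_deriv (convex_Icc 0 1) hWcont ?_ ?_
      · rw [interior_Icc]
        exact fun μ hμ => (hWdiff μ hμ).differentiableWithinAt
      · rw [interior_Icc]
        exact htransM.mp hA
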